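/- In a finite DAG, if a vertex X has two distinct source ancestors S₁ and S₂, then Φ(S₁) ∪ Φ(S₂) ⊆ Φ(X), and consequently |Φ(X)| ≥ |Φ(S₁)| + 1 (strictly larger than |Φ(S₁)|). -/
import Mathlib


/-- Two vertices are dependent if they share a common ancestor
(ancestorship via the reflexive-transitive closure of the edge relation). -/
def Dep {V : Type*} (E : V → V → Prop) (x y : V) : Prop :=
  ∃ a, Relation.ReflTransGen E a x ∧ Relation.ReflTransGen E a y

/-- The dependence set of a vertex: all vertices dependent on it. -/
def Phi {V : Type*} (E : V → V → Prop) (x : V) : Set V := {y | Dep E x y}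

/-- Any ancestor of a source equals the source. -/
lemma source_anc {V : Type*} (E : V → V → Prop) (S : V) (hS : ∀ A, ¬ E A S)
    {a : V} (h : Relation.ReflTransGen E a S) : a = S := by
  rcases h.cases_tail with rfl | ⟨b, _, hb⟩
  · rfl
  · exact absurd hb (hS b)

/-- In a finite DAG, if a vertex has two distinct source ancestors S₁ and S₂,
then Φ(S₁) ∪ Φ(S₂) ⊆ Φ(X) and |Φ(X)| ≥ |Φ(S₁)| + 1. -/
theorem two_source_ancestors_dep_set {V : Type*} [Fintype V] (E : V → V → Prop)
    (hdag : Irreflexive (Relation.TransGen E))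
    (X S₁ S₂ : V) (hne : S₁ ≠ S₂)
    (hS₁ : ∀ A, ¬ E A S₁) (hS₂ : ∀ A, ¬ E A S₂)
    (hanc₁ : Relation.ReflTransGen E S₁ X) (hanc₂ : Relation.ReflTransGen E S₂ X) :
    Phi E S₁ ∪ Phi E S₂ ⊆ Phi E X ∧ (Phi E S₁).ncard + 1 ≤ (Phi E X).ncard := by
  have hsub : Phi E S₁ ∪ Phi E S₂ ⊆ Phi E X := by
    rintro y (⟨a, ha1, ha2⟩ | ⟨a, ha1, ha2⟩)
    · exact ⟨S₁, hanc₁, (source_anc E S₁ hS₁ ha1) ▸ ha2⟩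
    · exact ⟨S₂, hanc₂, (source_anc E S₂ hS₂ ha1) ▸ ha2⟩
  refine ⟨hsub, ?_⟩
  have hS₂X : S₂ ∈ Phi E X := ⟨S₂, hanc₂, Relation.ReflTransGen.refl⟩
  have hS₂not : S₂ ∉ Phi E S₁ := by
    rintro ⟨a, ha1, ha2⟩
    have h1 := source_anc E S₁ hS₁ ha1
    have h2 := source_anc E S₂ hS₂ ha2
    exact hne (h1 ▸ h2)
  have hins : insert S₂ (Phi E S₁) ⊆ Phi E X := by
    intro y hy
    rcases hy with rfl | hy
    · exact hS₂X
    · exact hsub (Or.inl hy)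
  have hfin : (Phi E X).Finite := Set.toFinite _
  calc (Phi E S₁).ncard + 1 = (insert S₂ (Phi E S₁)).ncard := by
        rw [Set.ncard_insert_of_notMem hS₂not (Set.toFinite _)]
    _ ≤ (Phi E X).ncard := Set.ncard_le_ncard hins hfin
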